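/- Let F be a formal group law over a commutative ring R. The power series F_Y(X,0) ∈ R[[X]] has constant term 1, hence is invertible in R[[X]]; write ω_F = (F_Y(X,0))^{-1}. Then a power series f ∈ R[[X]] satisfies the invariance condition f(F(X,Y))·F_X(X,Y) = f(X) in R[[X,Y]] if and only if f = f(0)·ω_F, where f(0) is the constant term of f. In particular the set of invariant f is a free R-module of rank 1 generated by ω_F. -/

import Mathlib

namespace FGL

variable {R : Type*} [CommRing R]

/-- `subst2 F a b` is the substitution `F(a,b)` of the power series `a`, `b`
(with zero constant term) into the two-variable power series `F`. -/
noncomputable def subst2 {σ : Type*} (F : MvPowerSeries (Fin 2) R)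
    (a b : MvPowerSeries σ R) : MvPowerSeries σ R :=
  fun d =>
    ∑ ij ∈ Finset.range ((d.sum fun _ k => k) + 1) ×ˢ
        Finset.range ((d.sum fun _ k => k) + 1),
      MvPowerSeries.coeff (Finsupp.single 0 ij.1 + Finsupp.single 1 ij.2) F *
        MvPowerSeries.coeff d (a ^ ij.1 * b ^ ij.2)

/-- `subst1 f G` is the substitution `f(G)` of the power series `G`
(with zero constant term) into the one-variable power series `f`. -/
noncomputable def subst1 {σ : Type*} (f : PowerSeries R) (G : MvPowerSeries σ R) :
    MvPowerSeries σ R :=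
  fun d =>
    ∑ n ∈ Finset.range ((d.sum fun _ k => k) + 1),
      PowerSeries.coeff n f * MvPowerSeries.coeff d (G ^ n)

/-- Composition `f(g)` of one-variable power series (`g` with zero constant term). -/
noncomputable def pcomp (f g : PowerSeries R) : PowerSeries R := subst1 f g

/-- A formal group law over `R`: a two-variable power series `F(X,Y)` with
`F(X,0) = X`, `F(0,Y) = Y`, `F(X,Y) = F(Y,X)` and `F(F(X,Y),Z) = F(X,F(Y,Z))`. -/
structure IsFGL (F : MvPowerSeries (Fin 2) R) : Prop where
  unit_left : subst2 F (MvPowerSeries.X 0) 0 = MvPowerSeries.X 0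
  unit_right : subst2 F 0 (MvPowerSeries.X 1) = MvPowerSeries.X 1
  comm : subst2 F (MvPowerSeries.X 1) (MvPowerSeries.X 0) = F
  assoc : subst2 F (subst2 F (MvPowerSeries.X 0) (MvPowerSeries.X 1))
        (MvPowerSeries.X 2 : MvPowerSeries (Fin 3) R)
      = subst2 F (MvPowerSeries.X 0) (subst2 F (MvPowerSeries.X 1) (MvPowerSeries.X 2))

/-- A homomorphism `f : F → G` of formal group laws: a one-variable power series with
zero constant term such that `f(F(X,Y)) = G(f(X), f(Y))`. -/
structure IsHom (F G : MvPowerSeries (Fin 2) R) (f : PowerSeries R) : Prop where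
  const : PowerSeries.constantCoeff f = 0
  hom : subst1 f F =
    subst2 G (subst1 f (MvPowerSeries.X 0)) (subst1 f (MvPowerSeries.X 1))

/-- The coefficientwise Frobenius twist `F^{(p)}`. -/
noncomputable def frob (p : ℕ) (F : MvPowerSeries (Fin 2) R) : MvPowerSeries (Fin 2) R :=
  fun d => (MvPowerSeries.coeff d F) ^ p

/-- The one-variable power series `F_Y(X,0)`, whose coefficient of `X^n` is the
coefficient of `X^n Y` in `F`. -/
noncomputable def FY0 (F : MvPowerSeries (Fin 2) R) : PowerSeries R :=
  PowerSeries.mk fun n =>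
    MvPowerSeries.coeff (Finsupp.single 0 n + Finsupp.single 1 1) F

/-- The formal partial derivative `F_X(X,Y)` with respect to the first variable. -/
noncomputable def FX (F : MvPowerSeries (Fin 2) R) : MvPowerSeries (Fin 2) R :=
  fun d => ((d 0 + 1 : ℕ) : R) * MvPowerSeries.coeff (d + Finsupp.single 0 1) F

/-- The `n`-series `[n]_F` of a formal group law, defined by `[0]_F = 0` and
`[n+1]_F(X) = F([n]_F(X), X)`. -/
noncomputable def nSeries (F : MvPowerSeries (Fin 2) R) : ℕ → PowerSeries R
  | 0 => 0
  | n + 1 => subst2 F (nSeries F n) PowerSeries.X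


section Aux
variable {σ : Type*}

/-- Total degree of an exponent. -/
def deg (d : σ →₀ ℕ) : ℕ := d.sum fun _ k => k

lemma deg_add (u v : σ →₀ ℕ) : deg (u + v) = deg u + deg v :=
  Finsupp.sum_add_index' (fun _ => rfl) (fun _ _ _ => rfl)

lemma deg_zero : deg (0 : σ →₀ ℕ) = 0 := Finsupp.sum_zero_index

lemma deg_single (s : σ) (n : ℕ) : deg (Finsupp.single s n) = n :=
  Finsupp.sum_single_index rfl

lemma deg_eq_zero_iff {d : σ →₀ ℕ} : deg d = 0 ↔ d = 0 := by
  constructor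
  · intro h
    ext a
    by_cases ha : a ∈ d.support
    · exact (Finset.sum_eq_zero_iff.mp h) a ha
    · simpa using Finsupp.notMem_support_iff.mp ha
  · rintro rfl; exact deg_zero

variable [DecidableEq σ]

lemma coeff_pow_eq_zero {a : MvPowerSeries σ R}
    (ha : MvPowerSeries.constantCoeff a = 0)
    {d : σ →₀ ℕ} {n : ℕ} (h : deg d < n) : MvPowerSeries.coeff d (a ^ n) = 0 := by
  induction n generalizing d with
  | zero => omega
  | succ n ih =>
    rw [pow_succ, MvPowerSeries.coeff_mul]
    apply Finset.sum_eq_zero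
    rintro ⟨u, v⟩ huv
    rw [Finset.HasAntidiagonal.mem_antidiagonal] at huv
    by_cases hv : v = 0
    · subst hv
      have : MvPowerSeries.coeff 0 a = 0 := ha
      rw [this, mul_zero]
    · have hd : deg u + deg v = deg d := by rw [← deg_add, huv]
      have hv' : deg v ≠ 0 := fun h0 => hv (deg_eq_zero_iff.mp h0)
      have : deg u < n := by omega
      rw [ih this, zero_mul]

lemma coeff_pow_mul_eq_zero {a c : MvPowerSeries σ R}
    (ha : MvPowerSeries.constantCoeff a = 0)
    {d : σ →₀ ℕ} {n : ℕ} (h : deg d < n) : MvPowerSeries.coeff d (a ^ n * c) = 0 := by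
  rw [MvPowerSeries.coeff_mul]
  apply Finset.sum_eq_zero
  rintro ⟨u, v⟩ huv
  rw [Finset.HasAntidiagonal.mem_antidiagonal] at huv
  have hd : deg u + deg v = deg d := by rw [← deg_add, huv]
  have : deg u < n := by omega
  rw [coeff_pow_eq_zero ha this, zero_mul]

lemma coeff_subst2 (F : MvPowerSeries (Fin 2) R) {a b : MvPowerSeries σ R}
    (ha : MvPowerSeries.constantCoeff a = 0)
    (hb : MvPowerSeries.constantCoeff b = 0)
    {d : σ →₀ ℕ} {N : ℕ} (hN : deg d < N) :
    MvPowerSeries.coeff d (subst2 F a b) =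
      ∑ ij ∈ Finset.range N ×ˢ Finset.range N,
        MvPowerSeries.coeff (Finsupp.single 0 ij.1 + Finsupp.single 1 ij.2) F *
          MvPowerSeries.coeff d (a ^ ij.1 * b ^ ij.2) := by
  have base : MvPowerSeries.coeff d (subst2 F a b) =
      ∑ ij ∈ Finset.range (deg d + 1) ×ˢ Finset.range (deg d + 1),
        MvPowerSeries.coeff (Finsupp.single 0 ij.1 + Finsupp.single 1 ij.2) F *
          MvPowerSeries.coeff d (a ^ ij.1 * b ^ ij.2) := rfl
  rw [base]
  apply Finset.sum_subset
  · exact Finset.product_subset_product (Finset.range_subset_range.mpr hN)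
      (Finset.range_subset_range.mpr hN)
  · rintro ⟨i, j⟩ hij hij'
    simp only [Finset.mem_product, Finset.mem_range] at hij hij'
    have : deg d < i ∨ deg d < j := by omega
    rcases this with h' | h'
    · rw [coeff_pow_mul_eq_zero ha h', mul_zero]
    · rw [mul_comm (a ^ i), coeff_pow_mul_eq_zero hb h', mul_zero]

lemma coeff_subst1 (f : PowerSeries R) {G : MvPowerSeries σ R}
    (hG : MvPowerSeries.constantCoeff G = 0)
    {d : σ →₀ ℕ} {N : ℕ} (hN : deg d < N) :
    MvPowerSeries.coeff d (subst1 f G) =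
      ∑ n ∈ Finset.range N, PowerSeries.coeff n f * MvPowerSeries.coeff d (G ^ n) := by
  have base : MvPowerSeries.coeff d (subst1 f G) =
      ∑ n ∈ Finset.range (deg d + 1),
        PowerSeries.coeff n f * MvPowerSeries.coeff d (G ^ n) := rfl
  rw [base]
  apply Finset.sum_subset (Finset.range_subset_range.mpr hN)
  intro n _ hn
  simp only [Finset.mem_range] at hn
  have : deg d < n := by omega
  rw [coeff_pow_eq_zero hG this, mul_zero]

end Aux

section Pairs

/-- The exponent `X^i Y^j` as a `Finsupp` on `Fin 2`. -/
noncomputable def pr (i j : ℕ) : Fin 2 →₀ ℕ := Finsupp.single 0 i + Finsupp.single 1 j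

lemma pr_def (i j : ℕ) : pr i j = Finsupp.single 0 i + Finsupp.single 1 j := rfl

lemma pr_apply0 (i j : ℕ) : pr i j 0 = i := by
  simp [pr, Finsupp.single_apply]

lemma pr_apply1 (i j : ℕ) : pr i j 1 = j := by
  simp [pr, Finsupp.single_apply]

lemma deg_pr (i j : ℕ) : deg (pr i j) = i + j := by
  rw [pr, deg_add, deg_single, deg_single]

lemma pr_inj {i j k l : ℕ} (h : pr i j = pr k l) : i = k ∧ j = l := by
  constructor
  · have := DFunLike.congr_fun h 0
    rwa [pr_apply0, pr_apply0] at this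
  · have := DFunLike.congr_fun h 1
    rwa [pr_apply1, pr_apply1] at this

lemma eq_pr (d : Fin 2 →₀ ℕ) : d = pr (d 0) (d 1) := by
  ext a
  fin_cases a
  · exact (pr_apply0 (d 0) (d 1)).symm
  · exact (pr_apply1 (d 0) (d 1)).symm

lemma deg_eq (d : Fin 2 →₀ ℕ) : deg d = d 0 + d 1 := by
  conv_lhs => rw [eq_pr d]
  rw [deg_pr]

lemma X_pow_mul_X_pow {σ : Type*} [DecidableEq σ] (s t : σ) (k l : ℕ) :
    (MvPowerSeries.X s : MvPowerSeries σ R) ^ k * (MvPowerSeries.X t) ^ l =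
      MvPowerSeries.monomial (Finsupp.single s k + Finsupp.single t l) 1 := by
  rw [MvPowerSeries.X_pow_eq, MvPowerSeries.X_pow_eq, MvPowerSeries.monomial_mul_monomial,
    one_mul]

end Pairs

section Sub0

variable {σ : Type*} [DecidableEq σ]

lemma coeff_subst2_zero_left (F : MvPowerSeries (Fin 2) R) {h : MvPowerSeries σ R}
    (hh : MvPowerSeries.constantCoeff h = 0)
    {d : σ →₀ ℕ} {N : ℕ} (hN : deg d < N) :
    MvPowerSeries.coeff d (subst2 F 0 h) =
      ∑ j ∈ Finset.range N,
        MvPowerSeries.coeff (Finsupp.single 1 j) F * MvPowerSeries.coeff d (h ^ j) := by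
  rw [coeff_subst2 F (map_zero _) hh hN, Finset.sum_product]
  rw [Finset.sum_eq_single_of_mem 0 (Finset.mem_range.mpr (by omega))]
  · apply Finset.sum_congr rfl
    intro j _
    rw [pow_zero, one_mul, Finsupp.single_zero, zero_add]
  · intro i _ hi
    apply Finset.sum_eq_zero
    intro j _
    rw [zero_pow hi, zero_mul, map_zero, mul_zero]

lemma coeff_subst2_zero_right (F : MvPowerSeries (Fin 2) R) {h : MvPowerSeries σ R}
    (hh : MvPowerSeries.constantCoeff h = 0)
    {d : σ →₀ ℕ} {N : ℕ} (hN : deg d < N) :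
    MvPowerSeries.coeff d (subst2 F h 0) =
      ∑ i ∈ Finset.range N,
        MvPowerSeries.coeff (Finsupp.single 0 i) F * MvPowerSeries.coeff d (h ^ i) := by
  rw [coeff_subst2 F hh (map_zero _) hN]
  rw [Finset.sum_product_right]
  rw [Finset.sum_eq_single_of_mem 0 (Finset.mem_range.mpr (by omega))]
  · apply Finset.sum_congr rfl
    intro i _
    rw [pow_zero, mul_one, Finsupp.single_zero, add_zero]
  · intro j _ hj
    apply Finset.sum_eq_zero
    intro i _
    rw [zero_pow hj, mul_zero, map_zero, mul_zero]

end Sub0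

section FGLCoeffs

variable {F : MvPowerSeries (Fin 2) R}

lemma coeff_Y (hF : IsFGL F) (n : ℕ) :
    MvPowerSeries.coeff (Finsupp.single 1 n) F = if n = 1 then 1 else 0 := by
  have h := congrArg (MvPowerSeries.coeff (Finsupp.single 1 n)) hF.unit_right
  rw [coeff_subst2_zero_left F (MvPowerSeries.constantCoeff_X 1)
      (lt_add_one (deg (Finsupp.single 1 n)))] at h
  rw [deg_single] at h
  rw [Finset.sum_eq_single_of_mem n (Finset.mem_range.mpr (by omega))] at h
  · rw [MvPowerSeries.X_pow_eq, MvPowerSeries.coeff_monomial_same, mul_one,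
      MvPowerSeries.coeff_X] at h
    rw [h]
    by_cases hn : n = 1
    · subst hn; simp
    · rw [if_neg hn, if_neg (fun hc => hn ((Finsupp.single_injective _) hc))]
  · intro j _ hj
    rw [MvPowerSeries.X_pow_eq, MvPowerSeries.coeff_monomial_ne
      (fun hc => hj ((Finsupp.single_injective 1) hc).symm), mul_zero]

lemma coeff_X_FGL (hF : IsFGL F) (n : ℕ) :
    MvPowerSeries.coeff (Finsupp.single 0 n) F = if n = 1 then 1 else 0 := by
  have h := congrArg (MvPowerSeries.coeff (Finsupp.single 0 n)) hF.unit_left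
  rw [coeff_subst2_zero_right F (MvPowerSeries.constantCoeff_X 0)
      (lt_add_one (deg (Finsupp.single 0 n)))] at h
  rw [deg_single] at h
  rw [Finset.sum_eq_single_of_mem n (Finset.mem_range.mpr (by omega))] at h
  · rw [MvPowerSeries.X_pow_eq, MvPowerSeries.coeff_monomial_same, mul_one,
      MvPowerSeries.coeff_X] at h
    rw [h]
    by_cases hn : n = 1
    · subst hn; simp
    · rw [if_neg hn, if_neg (fun hc => hn ((Finsupp.single_injective _) hc))]
  · intro j _ hj
    rw [MvPowerSeries.X_pow_eq, MvPowerSeries.coeff_monomial_ne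
      (fun hc => hj ((Finsupp.single_injective 0) hc).symm), mul_zero]

lemma coeff_zero_FGL (hF : IsFGL F) : MvPowerSeries.coeff 0 F = 0 := by
  have := coeff_Y hF 0
  rwa [Finsupp.single_zero, if_neg (by omega)] at this

lemma coeff_symm (hF : IsFGL F) (i j : ℕ) :
    MvPowerSeries.coeff (pr i j) F = MvPowerSeries.coeff (pr j i) F := by
  have h := congrArg (MvPowerSeries.coeff (pr j i)) hF.comm
  rw [coeff_subst2 F (MvPowerSeries.constantCoeff_X 1) (MvPowerSeries.constantCoeff_X 0)
      (lt_add_one (deg (pr j i)))] at h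
  rw [deg_pr] at h
  rw [Finset.sum_eq_single_of_mem (i, j)
      (Finset.mem_product.mpr ⟨Finset.mem_range.mpr (by omega),
        Finset.mem_range.mpr (by omega)⟩)] at h
  · dsimp only at h
    have e1 : Finsupp.single (1 : Fin 2) i + Finsupp.single 0 j = pr j i := by
      rw [pr, add_comm]
    rw [X_pow_mul_X_pow, e1, MvPowerSeries.coeff_monomial_same, mul_one] at h
    rw [pr_def i j]
    exact h
  · rintro ⟨k, l⟩ _ hkl
    dsimp only
    have e1 : Finsupp.single (1 : Fin 2) k + Finsupp.single 0 l = pr l k := by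
      rw [pr, add_comm]
    rw [X_pow_mul_X_pow, e1, MvPowerSeries.coeff_monomial_ne (fun hc => hkl (by
        obtain ⟨h1, h2⟩ := pr_inj hc
        simp [h1, h2])), mul_zero]

end FGLCoeffs

section Slice

variable {σ τ : Type*} [DecidableEq σ] [DecidableEq τ]

/-- Slice of a power series along an injection of variable sets (other variables set to `0`). -/
noncomputable def sl (φ : σ → τ) (S : MvPowerSeries τ R) : MvPowerSeries σ R :=
  fun e => MvPowerSeries.coeff (Finsupp.mapDomain φ e) S

lemma coeff_sl (φ : σ → τ) (S : MvPowerSeries τ R) (e : σ →₀ ℕ) :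
    MvPowerSeries.coeff e (sl φ S) = MvPowerSeries.coeff (Finsupp.mapDomain φ e) S := rfl

lemma deg_mapDomain (φ : σ → τ) (e : σ →₀ ℕ) : deg (Finsupp.mapDomain φ e) = deg e :=
  Finsupp.sum_mapDomain_index (fun _ => rfl) (fun _ _ _ => rfl)

variable {φ : σ → τ}

lemma support_subset_range (w w' : τ →₀ ℕ) {e : σ →₀ ℕ}
    (hw : w + w' = Finsupp.mapDomain φ e) : ↑w.support ⊆ Set.range φ := by
  intro x hx
  rw [Finset.mem_coe, Finsupp.mem_support_iff] at hx
  have hx' : x ∈ (Finsupp.mapDomain φ e).support := by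
    rw [Finsupp.mem_support_iff, ← hw, Finsupp.add_apply]
    omega
  rcases Finset.mem_image.mp (Finsupp.mapDomain_support hx') with ⟨y, _, hy⟩
  exact ⟨y, hy⟩

lemma comap_map (hφ : Function.Injective φ) (p : σ →₀ ℕ) :
    Finsupp.comapDomain φ (Finsupp.mapDomain φ p) hφ.injOn = p := by
  ext a
  rw [Finsupp.comapDomain_apply, Finsupp.mapDomain_apply hφ]

lemma sl_mul (hφ : Function.Injective φ) (S T : MvPowerSeries τ R) :
    sl φ (S * T) = sl φ S * sl φ T := by
  ext e
  rw [coeff_sl, MvPowerSeries.coeff_mul, MvPowerSeries.coeff_mul]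
  refine (Finset.sum_nbij' (fun p => (Finsupp.comapDomain φ p.1 hφ.injOn,
      Finsupp.comapDomain φ p.2 hφ.injOn))
    (fun p => (Finsupp.mapDomain φ p.1, Finsupp.mapDomain φ p.2)) ?_ ?_ ?_ ?_ ?_)
  · rintro ⟨u, v⟩ huv
    rw [Finset.HasAntidiagonal.mem_antidiagonal] at huv ⊢
    dsimp only
    apply Finsupp.mapDomain_injective hφ
    rw [Finsupp.mapDomain_add,
      Finsupp.mapDomain_comapDomain φ hφ _ (support_subset_range u v huv),
      Finsupp.mapDomain_comapDomain φ hφ _ (support_subset_range v u (by rwa [add_comm])), huv]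
  · rintro ⟨p, q⟩ hpq
    rw [Finset.HasAntidiagonal.mem_antidiagonal] at hpq ⊢
    rw [← Finsupp.mapDomain_add, hpq]
  · rintro ⟨u, v⟩ huv
    rw [Finset.HasAntidiagonal.mem_antidiagonal] at huv
    ext1
    · exact Finsupp.mapDomain_comapDomain φ hφ _ (support_subset_range u v huv)
    · exact Finsupp.mapDomain_comapDomain φ hφ _ (support_subset_range v u (by rwa [add_comm]))
  · rintro ⟨p, q⟩ _
    ext1 <;> · exact comap_map hφ _
  · rintro ⟨u, v⟩ huv
    rw [Finset.HasAntidiagonal.mem_antidiagonal] at huv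
    dsimp only
    rw [coeff_sl, coeff_sl,
      Finsupp.mapDomain_comapDomain φ hφ _ (support_subset_range u v huv),
      Finsupp.mapDomain_comapDomain φ hφ _ (support_subset_range v u (by rwa [add_comm]))]

lemma sl_one (hφ : Function.Injective φ) : sl φ (1 : MvPowerSeries τ R) = 1 := by
  ext e
  rw [coeff_sl, MvPowerSeries.coeff_one, MvPowerSeries.coeff_one]
  by_cases he : e = 0
  · subst he; rw [if_pos Finsupp.mapDomain_zero, if_pos rfl]
  · rw [if_neg (fun hc => he (Finsupp.mapDomain_injective hφ
      (hc.trans Finsupp.mapDomain_zero.symm))), if_neg he]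

lemma sl_pow (hφ : Function.Injective φ) (S : MvPowerSeries τ R) (n : ℕ) : sl φ (S ^ n) = sl φ S ^ n := by
  induction n with
  | zero => simpa using sl_one hφ
  | succ n ih => rw [pow_succ, pow_succ, sl_mul hφ, ih]

lemma sl_subst2 (hφ : Function.Injective φ) (F : MvPowerSeries (Fin 2) R) (a b : MvPowerSeries τ R) :
    sl φ (subst2 F a b) = subst2 F (sl φ a) (sl φ b) := by
  ext e
  have base : MvPowerSeries.coeff e (sl φ (subst2 F a b)) =
      ∑ ij ∈ Finset.range (deg (Finsupp.mapDomain φ e) + 1) ×ˢ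
          Finset.range (deg (Finsupp.mapDomain φ e) + 1),
        MvPowerSeries.coeff (Finsupp.single 0 ij.1 + Finsupp.single 1 ij.2) F *
          MvPowerSeries.coeff (Finsupp.mapDomain φ e) (a ^ ij.1 * b ^ ij.2) := rfl
  have base2 : MvPowerSeries.coeff e (subst2 F (sl φ a) (sl φ b)) =
      ∑ ij ∈ Finset.range (deg e + 1) ×ˢ Finset.range (deg e + 1),
        MvPowerSeries.coeff (Finsupp.single 0 ij.1 + Finsupp.single 1 ij.2) F *
          MvPowerSeries.coeff e ((sl φ a) ^ ij.1 * (sl φ b) ^ ij.2) := rfl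
  rw [base, base2, deg_mapDomain]
  apply Finset.sum_congr rfl
  rintro ⟨i, j⟩ _
  rw [← sl_pow hφ, ← sl_pow hφ, ← sl_mul hφ]
  rfl

lemma sl_subst1 (hφ : Function.Injective φ) (f : PowerSeries R) (G : MvPowerSeries τ R) :
    sl φ (subst1 f G) = subst1 f (sl φ G) := by
  ext e
  have base : MvPowerSeries.coeff e (sl φ (subst1 f G)) =
      ∑ n ∈ Finset.range (deg (Finsupp.mapDomain φ e) + 1),
        PowerSeries.coeff n f *
          MvPowerSeries.coeff (Finsupp.mapDomain φ e) (G ^ n) := rfl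
  have base2 : MvPowerSeries.coeff e (subst1 f (sl φ G)) =
      ∑ n ∈ Finset.range (deg e + 1),
        PowerSeries.coeff n f * MvPowerSeries.coeff e ((sl φ G) ^ n) := rfl
  rw [base, base2, deg_mapDomain]
  apply Finset.sum_congr rfl
  intro n _
  rw [← sl_pow hφ]
  rfl

lemma sl_X_mem (hφ : Function.Injective φ) (t : σ) : sl φ (MvPowerSeries.X (φ t) : MvPowerSeries τ R) =
    MvPowerSeries.X t := by
  ext e
  rw [coeff_sl, MvPowerSeries.coeff_X, MvPowerSeries.coeff_X]
  by_cases he : e = Finsupp.single t 1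
  · subst he
    rw [if_pos (by rw [Finsupp.mapDomain_single]), if_pos rfl]
  · rw [if_neg, if_neg he]
    intro hc
    apply he
    apply Finsupp.mapDomain_injective hφ
    rw [hc, Finsupp.mapDomain_single]

lemma sl_X_not_mem {s : τ} (hs : s ∉ Set.range φ) :
    sl φ (MvPowerSeries.X s : MvPowerSeries τ R) = 0 := by
  ext e
  rw [coeff_sl, MvPowerSeries.coeff_X, map_zero]
  rw [if_neg]
  intro hc
  apply hs
  have : s ∈ (Finsupp.mapDomain φ e).support := by
    rw [hc, Finsupp.support_single_ne_zero s one_ne_zero]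
    exact Finset.mem_singleton_self s
  rcases Finset.mem_image.mp (Finsupp.mapDomain_support this) with ⟨y, _, hy⟩
  exact ⟨y, hy⟩

end Slice

section SubstAlg

variable {σ : Type*} [DecidableEq σ]

lemma sum_antidiag_range {A : Type*} [AddCommMonoid A] (t : ℕ × ℕ → A) (N : ℕ)
    (ht : ∀ p : ℕ × ℕ, N ≤ p.1 + p.2 → t p = 0) :
    ∑ k ∈ Finset.range N, ∑ p ∈ Finset.HasAntidiagonal.antidiagonal k, t p =
      ∑ p ∈ Finset.range N ×ˢ Finset.range N, t p := by
  calc ∑ k ∈ Finset.range N, ∑ p ∈ Finset.HasAntidiagonal.antidiagonal k, t p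
      = ∑ x ∈ (Finset.range N).sigma (fun k => Finset.HasAntidiagonal.antidiagonal k), t x.2 :=
        Finset.sum_sigma' _ _ _
    _ = ∑ p ∈ (Finset.range N ×ˢ Finset.range N).filter (fun p => p.1 + p.2 < N), t p := by
        refine Finset.sum_nbij' (fun x => x.2) (fun p => ⟨p.1 + p.2, p⟩) ?_ ?_ ?_ ?_ ?_
        · rintro ⟨k, p⟩ hx
          rw [Finset.mem_sigma, Finset.mem_range, Finset.HasAntidiagonal.mem_antidiagonal] at hx
          dsimp only at hx ⊢
          obtain ⟨hk, hp⟩ := hx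
          simp only [Finset.mem_filter, Finset.mem_product, Finset.mem_range]
          omega
        · rintro p hp
          simp only [Finset.mem_filter, Finset.mem_product, Finset.mem_range] at hp
          rw [Finset.mem_sigma, Finset.mem_range, Finset.HasAntidiagonal.mem_antidiagonal]
          exact ⟨hp.2, rfl⟩
        · rintro ⟨k, p⟩ hx
          rw [Finset.mem_sigma, Finset.mem_range, Finset.HasAntidiagonal.mem_antidiagonal] at hx
          dsimp only at hx ⊢
          exact Sigma.ext hx.2 HEq.rfl
        · rintro p _
          rfl
        · rintro x _
          rfl
    _ = ∑ p ∈ Finset.range N ×ˢ Finset.range N, t p := by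
        apply Finset.sum_filter_of_ne
        rintro p hp hne
        by_contra hlt
        exact hne (ht p (by omega))

lemma coeff_subst1_mul (f : PowerSeries R) {G : MvPowerSeries σ R}
    (hG : MvPowerSeries.constantCoeff G = 0) (c : MvPowerSeries σ R)
    {d : σ →₀ ℕ} {N : ℕ} (hN : deg d < N) :
    MvPowerSeries.coeff d (subst1 f G * c) =
      ∑ n ∈ Finset.range N,
        PowerSeries.coeff n f * MvPowerSeries.coeff d (G ^ n * c) := by
  rw [MvPowerSeries.coeff_mul]
  have step : ∀ uv ∈ Finset.HasAntidiagonal.antidiagonal d,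
      MvPowerSeries.coeff (Prod.fst uv) (subst1 f G) * MvPowerSeries.coeff uv.2 c =
      ∑ n ∈ Finset.range N, PowerSeries.coeff n f *
        (MvPowerSeries.coeff uv.1 (G ^ n) * MvPowerSeries.coeff uv.2 c) := by
    rintro ⟨u, v⟩ huv
    rw [Finset.HasAntidiagonal.mem_antidiagonal] at huv
    dsimp only at huv ⊢
    have hdeg : deg u ≤ deg d := by
      have := congrArg deg huv
      rw [deg_add] at this
      omega
    rw [coeff_subst1 f hG (lt_of_le_of_lt hdeg hN), Finset.sum_mul]
    apply Finset.sum_congr rfl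
    intro n _
    rw [mul_assoc]
  rw [Finset.sum_congr rfl step, Finset.sum_comm]
  apply Finset.sum_congr rfl
  intro n _
  rw [MvPowerSeries.coeff_mul, Finset.mul_sum]

lemma coeff_subst2_mul (H : MvPowerSeries (Fin 2) R) {a b : MvPowerSeries σ R}
    (ha : MvPowerSeries.constantCoeff a = 0)
    (hb : MvPowerSeries.constantCoeff b = 0) (c : MvPowerSeries σ R)
    {d : σ →₀ ℕ} {N : ℕ} (hN : deg d < N) :
    MvPowerSeries.coeff d (subst2 H a b * c) =
      ∑ ij ∈ Finset.range N ×ˢ Finset.range N,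
        MvPowerSeries.coeff (Finsupp.single 0 ij.1 + Finsupp.single 1 ij.2) H *
          MvPowerSeries.coeff d (a ^ ij.1 * b ^ ij.2 * c) := by
  rw [MvPowerSeries.coeff_mul]
  have step : ∀ uv ∈ Finset.HasAntidiagonal.antidiagonal d,
      MvPowerSeries.coeff (Prod.fst uv) (subst2 H a b) * MvPowerSeries.coeff uv.2 c =
      ∑ ij ∈ Finset.range N ×ˢ Finset.range N,
        MvPowerSeries.coeff (Finsupp.single 0 ij.1 + Finsupp.single 1 ij.2) H *
          (MvPowerSeries.coeff uv.1 (a ^ ij.1 * b ^ ij.2) *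
            MvPowerSeries.coeff uv.2 c) := by
    rintro ⟨u, v⟩ huv
    rw [Finset.HasAntidiagonal.mem_antidiagonal] at huv
    dsimp only at huv ⊢
    have hdeg : deg u ≤ deg d := by
      have := congrArg deg huv
      rw [deg_add] at this
      omega
    rw [coeff_subst2 H ha hb (lt_of_le_of_lt hdeg hN), Finset.sum_mul]
    apply Finset.sum_congr rfl
    intro ij _
    rw [mul_assoc]
  rw [Finset.sum_congr rfl step, Finset.sum_comm]
  apply Finset.sum_congr rfl
  intro ij _
  rw [MvPowerSeries.coeff_mul, Finset.mul_sum]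

lemma subst1_one (G : MvPowerSeries σ R) : subst1 (1 : PowerSeries R) G = 1 := by
  ext d
  have base : MvPowerSeries.coeff d (subst1 (1 : PowerSeries R) G) =
      ∑ n ∈ Finset.range (deg d + 1),
        PowerSeries.coeff n 1 * MvPowerSeries.coeff d (G ^ n) := rfl
  rw [base, Finset.sum_eq_single_of_mem 0 (Finset.mem_range.mpr (by omega))]
  · rw [pow_zero, PowerSeries.coeff_one, if_pos rfl, one_mul]
  · intro n _ hn
    rw [PowerSeries.coeff_one, if_neg hn, zero_mul]

lemma subst1_mul {G : MvPowerSeries σ R} (hG : MvPowerSeries.constantCoeff G = 0)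
    (f g : PowerSeries R) :
    subst1 (f * g) G = subst1 f G * subst1 g G := by
  ext d
  set N := deg d + 1 with hNdef
  have hdN : deg d < N := by omega
  rw [coeff_subst1 (f * g) hG hdN, coeff_subst1_mul f hG (subst1 g G) hdN]
  have lhs : ∀ k ∈ Finset.range N,
      PowerSeries.coeff k (f * g) * MvPowerSeries.coeff d (G ^ k) =
      ∑ p ∈ Finset.HasAntidiagonal.antidiagonal k,
        PowerSeries.coeff p.1 f * PowerSeries.coeff p.2 g *
          MvPowerSeries.coeff d (G ^ (p.1 + p.2)) := by
    intro k _
    rw [PowerSeries.coeff_mul, Finset.sum_mul]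
    apply Finset.sum_congr rfl
    intro p hp
    rw [Finset.HasAntidiagonal.mem_antidiagonal] at hp
    rw [hp]
  rw [Finset.sum_congr rfl lhs,
    sum_antidiag_range _ N (by
      rintro p hp
      rw [coeff_pow_eq_zero hG (by omega), mul_zero])]
  have rhs : ∀ n ∈ Finset.range N,
      PowerSeries.coeff n f * MvPowerSeries.coeff d (G ^ n * subst1 g G) =
      ∑ m ∈ Finset.range N, PowerSeries.coeff n f *
        (PowerSeries.coeff m g * MvPowerSeries.coeff d (G ^ (m + n))) := by
    intro n _
    rw [mul_comm (G ^ n), coeff_subst1_mul g hG (G ^ n) hdN, Finset.mul_sum]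
    apply Finset.sum_congr rfl
    intro m _
    rw [← pow_add]
  rw [Finset.sum_congr rfl rhs, ← Finset.sum_product']
  apply Finset.sum_congr rfl
  rintro ⟨n, m⟩ _
  dsimp only
  rw [add_comm m n]
  ring

lemma subst1_C_mul (c : R) (h : PowerSeries R) (G : MvPowerSeries σ R) :
    subst1 (PowerSeries.C c * h) G = MvPowerSeries.C c * subst1 h G := by
  ext d
  have base : MvPowerSeries.coeff d (subst1 (PowerSeries.C c * h) G) =
      ∑ n ∈ Finset.range (deg d + 1),
        PowerSeries.coeff n (PowerSeries.C c * h) *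
          MvPowerSeries.coeff d (G ^ n) := rfl
  have base2 : MvPowerSeries.coeff d (subst1 h G) =
      ∑ n ∈ Finset.range (deg d + 1),
        PowerSeries.coeff n h * MvPowerSeries.coeff d (G ^ n) := rfl
  rw [base, MvPowerSeries.coeff_C_mul, base2, Finset.mul_sum]
  apply Finset.sum_congr rfl
  intro n _
  rw [PowerSeries.coeff_C_mul, mul_assoc]

lemma subst1_X_eq (f : PowerSeries R) : subst1 f (PowerSeries.X : PowerSeries R) = f := by
  apply PowerSeries.ext
  intro n
  have e1 : PowerSeries.coeff n (subst1 f (PowerSeries.X : PowerSeries R)) =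
      ∑ m ∈ Finset.range (deg (Finsupp.single () n) + 1),
        PowerSeries.coeff m f *
          MvPowerSeries.coeff (Finsupp.single () n)
            ((PowerSeries.X : PowerSeries R) ^ m) := rfl
  have eX : (PowerSeries.X : PowerSeries R) = MvPowerSeries.X () := rfl
  rw [e1, deg_single, Finset.sum_eq_single_of_mem n (Finset.mem_range.mpr (by omega))]
  · rw [eX, MvPowerSeries.X_pow_eq, MvPowerSeries.coeff_monomial_same, mul_one]
  · intro m _ hm
    rw [eX, MvPowerSeries.X_pow_eq, MvPowerSeries.coeff_monomial_ne
      (fun hc => hm ((Finsupp.single_injective ()) hc).symm), mul_zero]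

lemma subst1_zero (f : PowerSeries R) :
    subst1 f (0 : MvPowerSeries σ R) =
      MvPowerSeries.C (PowerSeries.constantCoeff f) := by
  ext d
  have base : MvPowerSeries.coeff d (subst1 f (0 : MvPowerSeries σ R)) =
      ∑ n ∈ Finset.range (deg d + 1),
        PowerSeries.coeff n f *
          MvPowerSeries.coeff d ((0 : MvPowerSeries σ R) ^ n) := rfl
  rw [base, Finset.sum_eq_single_of_mem 0 (Finset.mem_range.mpr (by omega))]
  · rw [pow_zero, ← PowerSeries.coeff_zero_eq_constantCoeff]
    rw [MvPowerSeries.coeff_one, MvPowerSeries.coeff_C]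
    by_cases hd : d = 0
    · rw [if_pos hd, if_pos hd, mul_one]
    · rw [if_neg hd, if_neg hd, mul_zero]
  · intro n _ hn
    rw [zero_pow hn, map_zero, mul_zero]

lemma constantCoeff_subst2 (F : MvPowerSeries (Fin 2) R) {a b : MvPowerSeries σ R}
    (ha : MvPowerSeries.constantCoeff a = 0)
    (hb : MvPowerSeries.constantCoeff b = 0)
    (h0 : MvPowerSeries.coeff 0 F = 0) :
    MvPowerSeries.constantCoeff (subst2 F a b) = 0 := by
  rw [← MvPowerSeries.coeff_zero_eq_constantCoeff_apply]
  rw [coeff_subst2 F ha hb (N := 1) (by rw [deg_zero]; omega)]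
  rw [Finset.range_one]
  rw [Finset.sum_eq_single_of_mem (0, 0) (Finset.mem_product.mpr
    ⟨Finset.mem_singleton_self 0, Finset.mem_singleton_self 0⟩)]
  · simp only [Finsupp.single_zero, zero_add, pow_zero, one_mul]
    rw [h0, zero_mul]
  · rintro ⟨i, j⟩ hij hne
    simp only [Finset.mem_product, Finset.mem_singleton] at hij
    exact absurd (Prod.ext hij.1 hij.2) hne

end SubstAlg

section FGLSubstVals

variable {F : MvPowerSeries (Fin 2) R}

lemma coeff_FX (F : MvPowerSeries (Fin 2) R) (e : Fin 2 →₀ ℕ) :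
    MvPowerSeries.coeff e (FX F) =
      ((e 0 + 1 : ℕ) : R) * MvPowerSeries.coeff (e + Finsupp.single 0 1) F := rfl

lemma subst2_zero_left_eq (hF : IsFGL F) {σ : Type*} [DecidableEq σ]
    {h : MvPowerSeries σ R} (hh : MvPowerSeries.constantCoeff h = 0) :
    subst2 F 0 h = h := by
  ext d
  rw [coeff_subst2_zero_left F hh (lt_add_one (deg d))]
  have step : ∀ j ∈ Finset.range (deg d + 1),
      MvPowerSeries.coeff (Finsupp.single 1 j) F * MvPowerSeries.coeff d (h ^ j) =
      if j = 1 then MvPowerSeries.coeff d (h ^ j) else 0 := by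
    intro j _
    rw [coeff_Y hF j]
    by_cases hj : j = 1
    · rw [if_pos hj, if_pos hj, one_mul]
    · rw [if_neg hj, if_neg hj, zero_mul]
  rw [Finset.sum_congr rfl step, Finset.sum_ite_eq']
  by_cases hd : deg d = 0
  · rw [if_neg (by rw [Finset.mem_range]; omega)]
    have hd0 : d = 0 := deg_eq_zero_iff.mp hd
    subst hd0
    rw [MvPowerSeries.coeff_zero_eq_constantCoeff_apply, hh]
  · rw [if_pos (Finset.mem_range.mpr (by omega)), pow_one]

lemma subst2_X_X (G : MvPowerSeries (Fin 2) R) :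
    subst2 G (MvPowerSeries.X 0) (MvPowerSeries.X 1) = G := by
  ext d
  rw [coeff_subst2 G (MvPowerSeries.constantCoeff_X 0) (MvPowerSeries.constantCoeff_X 1)
    (lt_add_one (deg d))]
  rw [Finset.sum_eq_single_of_mem (d 0, d 1) (Finset.mem_product.mpr
    ⟨Finset.mem_range.mpr (by rw [deg_eq d]; omega),
     Finset.mem_range.mpr (by rw [deg_eq d]; omega)⟩)]
  · dsimp only
    rw [X_pow_mul_X_pow, ← pr_def, ← eq_pr d,
      MvPowerSeries.coeff_monomial_same, mul_one]
  · rintro ⟨k, l⟩ _ hkl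
    dsimp only
    rw [X_pow_mul_X_pow, ← pr_def, MvPowerSeries.coeff_monomial_ne (fun hc => by
      obtain ⟨h1, h2⟩ := pr_inj ((eq_pr d).symm.trans hc)
      exact hkl (Prod.ext h1.symm h2.symm)), mul_zero]

lemma subst2_FX_zero (hF : IsFGL F) {σ : Type*} [DecidableEq σ]
    {h : MvPowerSeries σ R} (hh : MvPowerSeries.constantCoeff h = 0) :
    subst2 (FX F) 0 h = subst1 (FY0 F) h := by
  ext d
  rw [coeff_subst2_zero_left (FX F) hh (lt_add_one (deg d)),
    coeff_subst1 (FY0 F) hh (lt_add_one (deg d))]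
  apply Finset.sum_congr rfl
  intro j _
  congr 1
  rw [coeff_FX]
  have h1 : (Finsupp.single (1 : Fin 2) j) 0 = 0 :=
    Finsupp.single_eq_of_ne (by decide)
  have h2 : Finsupp.single (1 : Fin 2) j + Finsupp.single 0 1 = pr 1 j := by
    rw [pr_def, add_comm]
  rw [h1, h2, coeff_symm hF 1 j, FY0, PowerSeries.coeff_mk, ← pr_def]
  norm_num

end FGLSubstVals

section Deriv

variable {σ : Type*} [DecidableEq σ]

/-- Partial derivative with respect to variable `i`. -/
noncomputable def D (i : σ) (S : MvPowerSeries σ R) : MvPowerSeries σ R :=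
  fun d => ((d i + 1 : ℕ) : R) * MvPowerSeries.coeff (d + Finsupp.single i 1) S

lemma coeff_D (i : σ) (S : MvPowerSeries σ R) (d : σ →₀ ℕ) :
    MvPowerSeries.coeff d (D i S) =
      ((d i + 1 : ℕ) : R) * MvPowerSeries.coeff (d + Finsupp.single i 1) S := rfl

lemma FX_eq_D (F : MvPowerSeries (Fin 2) R) : FX F = D 0 F := rfl

/-- A power series not involving the variable `i`. -/
def Indep (i : σ) (S : MvPowerSeries σ R) : Prop :=
  ∀ d : σ →₀ ℕ, d i ≠ 0 → MvPowerSeries.coeff d S = 0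

lemma D_apply_indep {i : σ} {S : MvPowerSeries σ R} (h : Indep i S) : D i S = 0 := by
  ext d
  rw [coeff_D, h _ (by rw [Finsupp.add_apply, Finsupp.single_eq_same]; omega), mul_zero,
    map_zero]

lemma indep_one (i : σ) : Indep i (1 : MvPowerSeries σ R) := by
  intro d hd
  rw [MvPowerSeries.coeff_one, if_neg (fun hc => hd (by rw [hc]; rfl))]

lemma Indep.mul {i : σ} {S T : MvPowerSeries σ R} (hS : Indep i S) (hT : Indep i T) :
    Indep i (S * T) := by
  intro d hd
  rw [MvPowerSeries.coeff_mul]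
  apply Finset.sum_eq_zero
  rintro ⟨u, v⟩ huv
  rw [Finset.HasAntidiagonal.mem_antidiagonal] at huv
  dsimp only at huv ⊢
  have := DFunLike.congr_fun huv i
  rw [Finsupp.add_apply] at this
  rcases Nat.eq_zero_or_pos (u i) with hu | hu
  · have hv : v i ≠ 0 := by omega
    rw [hT v hv, mul_zero]
  · rw [hS u (by omega), zero_mul]

lemma Indep.pow {i : σ} {S : MvPowerSeries σ R} (hS : Indep i S) (n : ℕ) :
    Indep i (S ^ n) := by
  induction n with
  | zero => rw [pow_zero]; exact indep_one i
  | succ n ih => rw [pow_succ]; exact ih.mul hS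

lemma indep_X {i j : σ} (hij : j ≠ i) : Indep i (MvPowerSeries.X j : MvPowerSeries σ R) := by
  intro d hd
  rw [MvPowerSeries.coeff_X, if_neg]
  intro hc
  apply hd
  rw [hc, Finsupp.single_eq_of_ne' hij]

lemma indep_subst2 {i : σ} (F : MvPowerSeries (Fin 2) R) {a b : MvPowerSeries σ R}
    (ha : Indep i a) (hb : Indep i b) : Indep i (subst2 F a b) := by
  intro d hd
  have base : MvPowerSeries.coeff d (subst2 F a b) =
      ∑ ij ∈ Finset.range (deg d + 1) ×ˢ Finset.range (deg d + 1),
        MvPowerSeries.coeff (Finsupp.single 0 ij.1 + Finsupp.single 1 ij.2) F *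
          MvPowerSeries.coeff d (a ^ ij.1 * b ^ ij.2) := rfl
  rw [base]
  apply Finset.sum_eq_zero
  rintro ⟨k, l⟩ _
  rw [((ha.pow k).mul (hb.pow l)) d hd, mul_zero]

/-- Auxiliary summand. -/
noncomputable def tA (i : σ) (S T : MvPowerSeries σ R) : (σ →₀ ℕ) × (σ →₀ ℕ) → R :=
  fun uv => ((uv.1 i : ℕ) : R) * MvPowerSeries.coeff uv.1 S * MvPowerSeries.coeff uv.2 T

lemma D_mul_aux (i : σ) (S T : MvPowerSeries σ R) (d : σ →₀ ℕ) :
    ∑ uv ∈ Finset.HasAntidiagonal.antidiagonal (d + Finsupp.single i 1), tA i S T uv =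
      MvPowerSeries.coeff d (D i S * T) := by
  rw [MvPowerSeries.coeff_mul]
  have hfil : ∑ uv ∈ Finset.HasAntidiagonal.antidiagonal (d + Finsupp.single i 1), tA i S T uv =
      ∑ uv ∈ (Finset.HasAntidiagonal.antidiagonal (d + Finsupp.single i 1)).filter
          (fun uv : (σ →₀ ℕ) × (σ →₀ ℕ) => uv.1 i ≠ 0), tA i S T uv := by
    refine (Finset.sum_filter_of_ne ?_).symm
    rintro uv _ hne h0
    apply hne
    rw [tA, h0, Nat.cast_zero, zero_mul, zero_mul]
  rw [hfil]
  refine Finset.sum_nbij' (fun uv => (uv.1 - Finsupp.single i 1, uv.2))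
    (fun uv => (uv.1 + Finsupp.single i 1, uv.2)) ?_ ?_ ?_ ?_ ?_
  · rintro ⟨u, v⟩ huv
    rw [Finset.mem_filter, Finset.HasAntidiagonal.mem_antidiagonal] at huv
    obtain ⟨huv, hui⟩ := huv
    dsimp only at *
    rw [Finset.HasAntidiagonal.mem_antidiagonal]
    have hle : Finsupp.single i 1 ≤ u := Finsupp.single_le_iff.mpr (by omega)
    apply add_right_cancel (b := Finsupp.single i 1)
    rw [add_right_comm, tsub_add_cancel_of_le hle, huv]
  · rintro ⟨u, v⟩ huv
    rw [Finset.HasAntidiagonal.mem_antidiagonal] at huv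
    dsimp only at *
    rw [Finset.mem_filter, Finset.HasAntidiagonal.mem_antidiagonal]
    constructor
    · rw [add_right_comm, huv]
    · rw [Finsupp.add_apply, Finsupp.single_eq_same]
      omega
  · rintro ⟨u, v⟩ huv
    rw [Finset.mem_filter, Finset.HasAntidiagonal.mem_antidiagonal] at huv
    obtain ⟨_, hui⟩ := huv
    dsimp only at *
    have hle : Finsupp.single i 1 ≤ u := Finsupp.single_le_iff.mpr (by omega)
    rw [Prod.mk.injEq]
    exact ⟨tsub_add_cancel_of_le hle, rfl⟩
  · rintro ⟨u, v⟩ _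
    dsimp only
    rw [Prod.mk.injEq]
    exact ⟨add_tsub_cancel_right _ _, rfl⟩
  · rintro ⟨u, v⟩ huv
    rw [Finset.mem_filter, Finset.HasAntidiagonal.mem_antidiagonal] at huv
    obtain ⟨_, hui⟩ := huv
    dsimp only at hui
    rw [tA]
    dsimp only
    rw [coeff_D, Finsupp.tsub_apply, Finsupp.single_eq_same]
    have hle : Finsupp.single i 1 ≤ u := Finsupp.single_le_iff.mpr (by omega)
    rw [tsub_add_cancel_of_le hle]
    have h2 : u i - 1 + 1 = u i := by omega
    rw [h2]

lemma D_mul (i : σ) (S T : MvPowerSeries σ R) :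
    D i (S * T) = D i S * T + S * D i T := by
  ext d
  rw [map_add, coeff_D, MvPowerSeries.coeff_mul, Finset.mul_sum]
  have split : ∀ uv ∈ Finset.HasAntidiagonal.antidiagonal (d + Finsupp.single i 1),
      ((d i + 1 : ℕ) : R) *
          (MvPowerSeries.coeff uv.1 S * MvPowerSeries.coeff uv.2 T) =
        tA i S T uv + tA i T S uv.swap := by
    rintro ⟨u, v⟩ huv
    rw [Finset.HasAntidiagonal.mem_antidiagonal] at huv
    rw [tA, tA]
    simp only [Prod.fst_swap, Prod.snd_swap]
    have hsum := DFunLike.congr_fun huv i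
    rw [Finsupp.add_apply, Finsupp.add_apply, Finsupp.single_eq_same] at hsum
    have hcast : ((d i + 1 : ℕ) : R) = ((u i : ℕ) : R) + ((v i : ℕ) : R) := by
      rw [← Nat.cast_add, hsum]
    rw [hcast]
    ring
  rw [Finset.sum_congr rfl split, Finset.sum_add_distrib, D_mul_aux]
  congr 1
  rw [mul_comm S (D i T), ← D_mul_aux i T S d]
  refine Finset.sum_nbij' Prod.swap Prod.swap ?_ ?_ ?_ ?_ ?_
  · rintro ⟨u, v⟩ huv
    rw [Finset.HasAntidiagonal.mem_antidiagonal] at huv ⊢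
    simp only [Prod.fst_swap, Prod.snd_swap]
    rw [add_comm]
    exact huv
  · rintro ⟨u, v⟩ huv
    rw [Finset.HasAntidiagonal.mem_antidiagonal] at huv ⊢
    simp only [Prod.fst_swap, Prod.snd_swap]
    rw [add_comm]
    exact huv
  · rintro ⟨u, v⟩ _
    rfl
  · rintro ⟨u, v⟩ _
    rfl
  · rintro ⟨u, v⟩ _
    rfl

lemma D_pow (i : σ) (a : MvPowerSeries σ R) (n : ℕ) :
    D i (a ^ (n + 1)) = (n + 1) • (a ^ n * D i a) := by
  induction n with
  | zero =>
    simp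
  | succ n ih =>
    rw [pow_succ, D_mul, ih, smul_mul_assoc]
    have h1 : a ^ n * D i a * a = a ^ (n + 1) * D i a := by
      rw [mul_right_comm, ← pow_succ]
    have h2 : a ^ (n + 1) * D i a = a ^ (n + 1) * D i a := rfl
    rw [h1, succ_nsmul, succ_nsmul, succ_nsmul]

end Deriv

section ChainRule

variable {σ : Type*} [DecidableEq σ]

lemma coeff_pow_pow_mul_eq_zero {a b c : MvPowerSeries σ R}
    (ha : MvPowerSeries.constantCoeff a = 0)
    (hb : MvPowerSeries.constantCoeff b = 0)
    {d : σ →₀ ℕ} {m n : ℕ} (h : deg d < m + n) :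
    MvPowerSeries.coeff d (a ^ m * b ^ n * c) = 0 := by
  rw [mul_assoc, MvPowerSeries.coeff_mul]
  apply Finset.sum_eq_zero
  rintro ⟨u, v⟩ huv
  rw [Finset.HasAntidiagonal.mem_antidiagonal] at huv
  dsimp only at huv ⊢
  have hd : deg u + deg v = deg d := by
    rw [← deg_add, huv]
  by_cases hu : deg u < m
  · rw [coeff_pow_eq_zero ha hu, zero_mul]
  · rw [coeff_pow_mul_eq_zero hb (by omega), mul_zero]

lemma D_X_self (i : σ) : D i (MvPowerSeries.X i : MvPowerSeries σ R) = 1 := by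
  ext d
  rw [coeff_D, MvPowerSeries.coeff_X, MvPowerSeries.coeff_one]
  by_cases hd : d = 0
  · subst hd
    simp
  · rw [if_neg, if_neg hd, mul_zero]
    intro hc
    apply hd
    exact add_eq_right.mp hc

lemma D_subst2 (F : MvPowerSeries (Fin 2) R) {i : σ} {a b : MvPowerSeries σ R}
    (ha : MvPowerSeries.constantCoeff a = 0)
    (hb : MvPowerSeries.constantCoeff b = 0) (hbi : Indep i b) :
    D i (subst2 F a b) = subst2 (FX F) a b * D i a := by
  ext d
  set M := deg d with hM
  rw [coeff_D]
  rw [coeff_subst2 F ha hb (N := M + 2) (by rw [deg_add, deg_single]; omega)]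
  rw [Finset.mul_sum]
  have step1 : ∀ kl ∈ Finset.range (M + 2) ×ˢ Finset.range (M + 2),
      ((d i + 1 : ℕ) : R) *
        (MvPowerSeries.coeff (Finsupp.single 0 kl.1 + Finsupp.single 1 kl.2) F *
          MvPowerSeries.coeff (d + Finsupp.single i 1) (a ^ kl.1 * b ^ kl.2)) =
      MvPowerSeries.coeff (Finsupp.single 0 kl.1 + Finsupp.single 1 kl.2) F *
        MvPowerSeries.coeff d (D i (a ^ kl.1 * b ^ kl.2)) := by
    intro kl _
    rw [coeff_D]
    ring
  rw [Finset.sum_congr rfl step1, Finset.sum_product, Finset.sum_range_succ']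
  have hzero : ∑ l ∈ Finset.range (M + 2),
      MvPowerSeries.coeff (Finsupp.single 0 0 + Finsupp.single 1 l) F *
        MvPowerSeries.coeff d (D i (a ^ 0 * b ^ l)) = 0 := by
    apply Finset.sum_eq_zero
    intro l _
    rw [pow_zero, one_mul, D_apply_indep (hbi.pow l), map_zero, mul_zero]
  rw [hzero, add_zero]
  rw [coeff_subst2_mul (FX F) ha hb (D i a) (lt_add_one M)]
  rw [Finset.sum_product]
  apply Finset.sum_congr rfl
  intro k hk
  rw [Finset.sum_range_succ]
  have hD : ∀ l : ℕ, D i (a ^ (k + 1) * b ^ l) = (k + 1) • (a ^ k * b ^ l * D i a) := by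
    intro l
    rw [D_mul, D_apply_indep (hbi.pow l), mul_zero, add_zero, D_pow, smul_mul_assoc]
    congr 1
    ring
  have hlast : MvPowerSeries.coeff (Finsupp.single 0 (k + 1) + Finsupp.single 1 (M + 1)) F *
      MvPowerSeries.coeff d (D i (a ^ (k + 1) * b ^ (M + 1))) = 0 := by
    rw [hD (M + 1), map_nsmul, nsmul_eq_mul]
    have : MvPowerSeries.coeff d (a ^ k * b ^ (M + 1) * D i a) = 0 :=
      coeff_pow_pow_mul_eq_zero ha hb (by omega)
    rw [this, mul_zero, mul_zero]
  rw [hlast, add_zero]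
  apply Finset.sum_congr rfl
  intro l _
  rw [hD l, map_nsmul, nsmul_eq_mul, coeff_FX]
  have happ : ((Finsupp.single (0 : Fin 2) k + Finsupp.single 1 l) : Fin 2 →₀ ℕ) 0 = k := by
    rw [← pr_def, pr_apply0]
  have hidx : (Finsupp.single (0 : Fin 2) k + Finsupp.single 1 l) + Finsupp.single 0 1 =
      Finsupp.single (0 : Fin 2) (k + 1) + Finsupp.single 1 l := by
    rw [Finsupp.single_add, add_right_comm]
  rw [happ, hidx]
  push_cast
  ring

end ChainRule

section Key

variable {F : MvPowerSeries (Fin 2) R}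

lemma key (hF : IsFGL F) :
    subst1 (FY0 F) F = FX F * subst1 (FY0 F) (MvPowerSeries.X 0 : MvPowerSeries (Fin 2) R) := by
  have hF0 : MvPowerSeries.coeff 0 F = 0 := coeff_zero_FGL hF
  set A : MvPowerSeries (Fin 3) R :=
    subst2 F (MvPowerSeries.X 0) (MvPowerSeries.X 1) with hA
  set B : MvPowerSeries (Fin 3) R :=
    subst2 F (MvPowerSeries.X 1) (MvPowerSeries.X 2) with hB
  have h0A : MvPowerSeries.constantCoeff A = 0 :=
    constantCoeff_subst2 F (MvPowerSeries.constantCoeff_X 0)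
      (MvPowerSeries.constantCoeff_X 1) hF0
  have hstar := congrArg (D (0 : Fin 3)) hF.assoc
  rw [D_subst2 F h0A (MvPowerSeries.constantCoeff_X 2)
      (indep_X (by decide : (2 : Fin 3) ≠ 0))] at hstar
  rw [D_subst2 F (MvPowerSeries.constantCoeff_X 0) (MvPowerSeries.constantCoeff_X 1)
      (indep_X (by decide : (1 : Fin 3) ≠ 0))] at hstar
  rw [D_subst2 F (MvPowerSeries.constantCoeff_X 0)
      (constantCoeff_subst2 F (MvPowerSeries.constantCoeff_X 1)
        (MvPowerSeries.constantCoeff_X 2) hF0)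
      (indep_subst2 F (indep_X (by decide : (1 : Fin 3) ≠ 0))
        (indep_X (by decide : (2 : Fin 3) ≠ 0)))] at hstar
  rw [D_X_self, mul_one, mul_one] at hstar
  -- hstar : subst2 (FX F) A X2 * subst2 (FX F) X0 X1 = subst2 (FX F) X0 B
  have hinj : Function.Injective (Fin.succ : Fin 2 → Fin 3) := Fin.succ_injective 2
  have hsl := congrArg (sl (Fin.succ : Fin 2 → Fin 3)) hstar
  rw [sl_mul hinj] at hsl
  simp only [sl_subst2 hinj, hA] at hsl
  have e1 : (Fin.succ (0 : Fin 2) : Fin 3) = 1 := rfl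
  have e2 : (Fin.succ (1 : Fin 2) : Fin 3) = 2 := rfl
  have hX0 : sl (Fin.succ : Fin 2 → Fin 3) (MvPowerSeries.X 0 : MvPowerSeries (Fin 3) R)
      = 0 := by
    apply sl_X_not_mem
    rintro ⟨y, hy⟩
    exact Fin.succ_ne_zero y hy
  have hX1 : sl (Fin.succ : Fin 2 → Fin 3) (MvPowerSeries.X 1 : MvPowerSeries (Fin 3) R)
      = MvPowerSeries.X 0 := by
    rw [← e1]
    exact sl_X_mem hinj 0
  have hX2 : sl (Fin.succ : Fin 2 → Fin 3) (MvPowerSeries.X 2 : MvPowerSeries (Fin 3) R)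
      = MvPowerSeries.X 1 := by
    rw [← e2]
    exact sl_X_mem hinj 1
  rw [hX0, hX1, hX2] at hsl
  rw [subst2_zero_left_eq hF (MvPowerSeries.constantCoeff_X 0)] at hsl
  rw [subst2_X_X, subst2_X_X] at hsl
  rw [subst2_FX_zero hF (MvPowerSeries.constantCoeff_X 0)] at hsl
  have hcF : MvPowerSeries.constantCoeff F = 0 := by
    rw [← MvPowerSeries.coeff_zero_eq_constantCoeff_apply]
    exact hF0
  rw [subst2_FX_zero hF hcF] at hsl
  exact hsl.symm

end Key

section Final

variable {F : MvPowerSeries (Fin 2) R}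

lemma sl_F_eq (hF : IsFGL F) :
    sl (fun _ : Unit => (1 : Fin 2)) F = (PowerSeries.X : PowerSeries R) := by
  apply PowerSeries.ext
  intro n
  have hL : PowerSeries.coeff n (sl (fun _ : Unit => (1 : Fin 2)) F) =
      MvPowerSeries.coeff (Finsupp.single 1 n) F := by
    rw [PowerSeries.coeff_def (Finsupp.single_eq_same : (Finsupp.single () n) () = n),
      coeff_sl, Finsupp.mapDomain_single]
  rw [hL, coeff_Y hF, PowerSeries.coeff_X]

lemma sl_FX_eq (hF : IsFGL F) :
    sl (fun _ : Unit => (1 : Fin 2)) (FX F) = FY0 F := by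
  apply PowerSeries.ext
  intro n
  have hL : PowerSeries.coeff n (sl (fun _ : Unit => (1 : Fin 2)) (FX F)) =
      MvPowerSeries.coeff (Finsupp.single 1 n) (FX F) := by
    rw [PowerSeries.coeff_def (Finsupp.single_eq_same : (Finsupp.single () n) () = n),
      coeff_sl, Finsupp.mapDomain_single]
  rw [hL, coeff_FX]
  rw [Finsupp.single_eq_of_ne' (by decide : (1 : Fin 2) ≠ 0)]
  have h2 : Finsupp.single (1 : Fin 2) n + Finsupp.single 0 1 = pr 1 n := by
    rw [pr_def, add_comm]
  rw [h2, coeff_symm hF 1 n, FY0, PowerSeries.coeff_mk, ← pr_def]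
  norm_num

theorem statement5' (hF : IsFGL F) :
    PowerSeries.constantCoeff (FY0 F) = 1 ∧
      ∃ ω : PowerSeries R, FY0 F * ω = 1 ∧
        ∀ f : PowerSeries R,
          subst1 f F * FX F = subst1 f (MvPowerSeries.X 0 : MvPowerSeries (Fin 2) R) ↔
            f = PowerSeries.C (PowerSeries.constantCoeff f) * ω := by
  have hF0 : MvPowerSeries.coeff 0 F = 0 := coeff_zero_FGL hF
  have hcF : MvPowerSeries.constantCoeff F = 0 := by
    rw [← MvPowerSeries.coeff_zero_eq_constantCoeff_apply]
    exact hF0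
  have hX0c : MvPowerSeries.constantCoeff (MvPowerSeries.X 0 : MvPowerSeries (Fin 2) R) = 0 :=
    MvPowerSeries.constantCoeff_X 0
  have hg1 : PowerSeries.constantCoeff (FY0 F) = 1 := by
    have e0 : PowerSeries.constantCoeff (FY0 F) = PowerSeries.coeff 0 (FY0 F) := by
      rw [PowerSeries.coeff_zero_eq_constantCoeff]
    rw [e0, FY0, PowerSeries.coeff_mk, Finsupp.single_zero, zero_add, coeff_Y hF 1,
      if_pos rfl]
  have hgω : FY0 F * PowerSeries.invOfUnit (FY0 F) 1 = 1 :=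
    PowerSeries.mul_invOfUnit (FY0 F) 1 (by rw [hg1, Units.val_one])
  refine ⟨hg1, PowerSeries.invOfUnit (FY0 F) 1, hgω, ?_⟩
  set ω := PowerSeries.invOfUnit (FY0 F) 1 with hωdef
  intro f
  constructor
  · intro hE
    have hu : Function.Injective (fun _ : Unit => (1 : Fin 2)) := fun a b _ => rfl
    have hsl := congrArg (sl (fun _ : Unit => (1 : Fin 2))) hE
    rw [sl_mul hu, sl_subst1 hu, sl_subst1 hu, sl_F_eq hF, sl_FX_eq hF] at hsl
    have hX0sl : sl (fun _ : Unit => (1 : Fin 2))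
        (MvPowerSeries.X 0 : MvPowerSeries (Fin 2) R) = 0 :=
      sl_X_not_mem (by rintro ⟨y, hy⟩; simp at hy)
    rw [hX0sl, subst1_X_eq, subst1_zero] at hsl
    have hCC : (MvPowerSeries.C (PowerSeries.constantCoeff f) : PowerSeries R) =
        PowerSeries.C (PowerSeries.constantCoeff f) := rfl
    rw [hCC] at hsl
    calc f = f * (FY0 F * ω) := by rw [hgω, mul_one]
      _ = f * FY0 F * ω := by rw [mul_assoc]
      _ = PowerSeries.C (PowerSeries.constantCoeff f) * ω := by rw [hsl]
  · intro hf
    have hK := key hF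
    have h1 : subst1 ω F * subst1 (FY0 F) F = 1 := by
      rw [← subst1_mul hcF, mul_comm ω (FY0 F), hgω, subst1_one]
    have h2 : subst1 (FY0 F) (MvPowerSeries.X 0 : MvPowerSeries (Fin 2) R) *
        subst1 ω (MvPowerSeries.X 0 : MvPowerSeries (Fin 2) R) = 1 := by
      rw [← subst1_mul hX0c, hgω, subst1_one]
    have hEω : subst1 ω F * FX F =
        subst1 ω (MvPowerSeries.X 0 : MvPowerSeries (Fin 2) R) := by
      calc subst1 ω F * FX F
          = subst1 ω F * FX F * (subst1 (FY0 F) (MvPowerSeries.X 0) *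
              subst1 ω (MvPowerSeries.X 0)) := by rw [h2, mul_one]
        _ = subst1 ω F * (FX F * subst1 (FY0 F) (MvPowerSeries.X 0)) *
              subst1 ω (MvPowerSeries.X 0) := by ring
        _ = subst1 ω F * subst1 (FY0 F) F * subst1 ω (MvPowerSeries.X 0) := by
              rw [← hK]
        _ = subst1 ω (MvPowerSeries.X 0) := by rw [h1, one_mul]
    rw [hf, subst1_C_mul, subst1_C_mul, mul_assoc, hEω]

end Final

/-- For a formal group law `F` over a commutative ring `R`, the power series `F_Y(X,0)` has
constant term `1`, hence is invertible with inverse `ω_F`; and `f ∈ R[[X]]` satisfies the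
invariance condition `f(F(X,Y)) · F_X(X,Y) = f(X)` if and only if `f = f(0) · ω_F`.  In
particular the invariant power series form a free `R`-module of rank one generated by `ω_F`. -/
theorem statement5 (R : Type*) [CommRing R]
    (F : MvPowerSeries (Fin 2) R) (hF : IsFGL F) :
    PowerSeries.constantCoeff (FY0 F) = 1 ∧
      ∃ ω : PowerSeries R, FY0 F * ω = 1 ∧
        ∀ f : PowerSeries R,
          subst1 f F * FX F = subst1 f (MvPowerSeries.X 0 : MvPowerSeries (Fin 2) R) ↔
            f = PowerSeries.C (PowerSeries.constantCoeff f) * ω := by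
  exact statement5' hF

end FGL
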